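/- For all n ≥ 0, (n+1)(2n+1)·C(2n,n) · ∑_{i=0}^{n} C(2i,i)·C(2n-2i,n-i)/((2i+1)(2n-2i+1)) = 2^{4n}. -/

import Mathlib

noncomputable def cc (i : ℕ) : ℚ := ((2 * i).choose i : ℚ)

lemma cc_pos (i : ℕ) : 0 < cc i := by
  have : 0 < (2 * i).choose i := Nat.choose_pos (by omega)
  simp only [cc]
  exact_mod_cast this

lemma cc_zero : cc 0 = 1 := by simp [cc]

lemma cc_rec (i : ℕ) : ((i : ℚ) + 1) * cc (i + 1) = 2 * (2 * i + 1) * cc i := by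
  have h := Nat.succ_mul_centralBinom_succ i
  simp only [Nat.centralBinom] at h
  have h2 : ((i : ℚ) + 1) * ((2 * (i + 1)).choose (i + 1) : ℚ)
      = 2 * (2 * (i : ℚ) + 1) * ((2 * i).choose i : ℚ) := by exact_mod_cast h
  simp only [cc]
  linarith [h2]

lemma cc_eq (i : ℕ) : cc (i + 1) = 2 * (2 * i + 1) * cc i / ((i : ℚ) + 1) := by
  have hi : ((i : ℚ) + 1) ≠ 0 := by positivity
  field_simp
  linarith [cc_rec i]

lemma step (n i j : ℕ) (hij : i + j = n) :
    ((n : ℚ) + 1) ^ 2 * (2 * n + 3) * cc (n + 1) * (cc i * cc (j + 1) / (2 * i + 1))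
      = 16 * ((n : ℚ) + 1) ^ 2 * (2 * n + 1) * cc n * (cc i * cc j / (2 * i + 1))
        + (2 * (2 * (n : ℚ) + 1) * cc n * (i * cc i * cc (j + 1))
           - 2 * (2 * (n : ℚ) + 1) * cc n * (((i : ℚ) + 1) * cc (i + 1) * cc j)) := by
  subst hij
  rw [cc_eq i, cc_eq j, cc_eq (i + j)]
  have hi : ((i : ℚ) + 1) ≠ 0 := by positivity
  have hj : ((j : ℚ) + 1) ≠ 0 := by positivity
  have hij : (((i + j : ℕ) : ℚ) + 1) ≠ 0 := by positivity
  have h2i : (2 * (i : ℚ) + 1) ≠ 0 := by positivity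
  push_cast
  push_cast at hij
  field_simp
  ring

lemma key (n : ℕ) :
    (2 * (n : ℚ) + 1) * cc n * ∑ i ∈ Finset.range (n + 1), cc i * cc (n - i) / (2 * i + 1)
      = 16 ^ n := by
  induction n with
  | zero => norm_num [cc]
  | succ n ih =>
    set f : ℕ → ℚ := fun k => 2 * (2 * (n : ℚ) + 1) * cc n * ((k : ℚ) * cc k * cc (n + 1 - k))
      with hf
    have hstep : ∑ i ∈ Finset.range (n + 1),
        (((n : ℚ) + 1) ^ 2 * (2 * n + 3) * cc (n + 1) * (cc i * cc (n + 1 - i) / (2 * i + 1)))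
        = ∑ i ∈ Finset.range (n + 1),
          (16 * ((n : ℚ) + 1) ^ 2 * (2 * n + 1) * cc n * (cc i * cc (n - i) / (2 * i + 1))
            + (f i - f (i + 1))) := by
      apply Finset.sum_congr rfl
      intro i hi
      have hle : i ≤ n := by simpa [Finset.mem_range, Nat.lt_succ_iff] using hi
      have h1 : n + 1 - i = (n - i) + 1 := by omega
      have h2 : n + 1 - (i + 1) = n - i := by omega
      rw [hf]
      simp only [h1, h2]
      push_cast
      exact step n i (n - i) (by omega)
    have htel : ∑ i ∈ Finset.range (n + 1), (f i - f (i + 1)) = f 0 - f (n + 1) :=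
      Finset.sum_range_sub' f (n + 1)
    have hE : ((n : ℚ) + 1) ^ 2 * ((2 * n + 3) * cc (n + 1) *
          ∑ i ∈ Finset.range (n + 1), cc i * cc (n + 1 - i) / (2 * i + 1))
        = 16 * ((n : ℚ) + 1) ^ 2 * (2 * n + 1) * cc n *
            (∑ i ∈ Finset.range (n + 1), cc i * cc (n - i) / (2 * i + 1))
          + (f 0 - f (n + 1)) := by
      have e1 : ((n : ℚ) + 1) ^ 2 * ((2 * n + 3) * cc (n + 1) *
            ∑ i ∈ Finset.range (n + 1), cc i * cc (n + 1 - i) / (2 * i + 1))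
          = ∑ i ∈ Finset.range (n + 1),
            (((n : ℚ) + 1) ^ 2 * (2 * n + 3) * cc (n + 1) * (cc i * cc (n + 1 - i) / (2 * i + 1))) := by
        simp only [Finset.mul_sum]
        exact Finset.sum_congr rfl (fun i _ => by ring)
      have e2 : (16 : ℚ) * ((n : ℚ) + 1) ^ 2 * (2 * n + 1) * cc n *
            (∑ i ∈ Finset.range (n + 1), cc i * cc (n - i) / (2 * i + 1))
          = ∑ i ∈ Finset.range (n + 1),
            (16 * ((n : ℚ) + 1) ^ 2 * (2 * n + 1) * cc n * (cc i * cc (n - i) / (2 * i + 1))) := by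
        rw [Finset.mul_sum]
      rw [e1, hstep, Finset.sum_add_distrib, htel, e2]
    have hf0 : f 0 = 0 := by simp [hf]
    have hfn : f (n + 1) = 2 * (2 * (n : ℚ) + 1) * cc n * (((n : ℚ) + 1) * cc (n + 1)) := by
      simp only [hf, Nat.add_sub_cancel_left, Nat.sub_self, cc_zero]
      push_cast
      ring
    have hne : ((n : ℚ) + 1) ≠ 0 := by positivity
    have hrec := cc_rec n
    have h2 : ((n : ℚ) + 1) ^ 2 * ((2 * n + 3) * cc (n + 1) *
          ∑ i ∈ Finset.range (n + 1), cc i * cc (n + 1 - i) / (2 * i + 1))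
        = ((n : ℚ) + 1) ^ 2 * (16 ^ (n + 1) - cc (n + 1) ^ 2) := by
      rw [hE, hf0, hfn]
      linear_combination 16 * ((n : ℚ) + 1) ^ 2 * ih + (((n : ℚ) + 1) * cc (n + 1)) * hrec
    have hA : (2 * (n : ℚ) + 3) * cc (n + 1) *
          ∑ i ∈ Finset.range (n + 1), cc i * cc (n + 1 - i) / (2 * i + 1)
        = 16 ^ (n + 1) - cc (n + 1) ^ 2 := by
      have := mul_left_cancel₀ (pow_ne_zero 2 hne) h2
      linarith [this]
    rw [Finset.sum_range_succ]
    simp only [Nat.sub_self, cc_zero]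
    push_cast
    have h23 : (2 * (n : ℚ) + 3) ≠ 0 := by positivity
    field_simp
    linear_combination hA
    
lemma pf (n i j : ℕ) (hij : i + j = n) :
    cc i * cc j / ((2 * (i : ℚ) + 1) * (2 * (j : ℚ) + 1))
      = (1 / (2 * (n : ℚ) + 2)) *
          (cc i * cc j / (2 * i + 1) + cc i * cc j / (2 * j + 1)) := by
  subst hij
  have hi : (2 * (i : ℚ) + 1) ≠ 0 := by positivity
  have hj : (2 * (j : ℚ) + 1) ≠ 0 := by positivity
  push_cast
  have hn : (2 * ((i : ℚ) + j) + 2) ≠ 0 := by positivity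
  field_simp
  ring

theorem stmt6 (n : ℕ) :
    ((n + 1) * (2 * n + 1) * Nat.choose (2 * n) n : ℚ) *
      ∑ i ∈ Finset.range (n + 1),
        (Nat.choose (2 * i) i * Nat.choose (2 * (n - i)) (n - i) : ℚ) /
          ((2 * i + 1) * (2 * (n - i) + 1)) = 2 ^ (4 * n) := by
  have hsum : ∑ i ∈ Finset.range (n + 1),
        (Nat.choose (2 * i) i * Nat.choose (2 * (n - i)) (n - i) : ℚ) /
          ((2 * i + 1) * (2 * (n - i) + 1))
      = (1 / (2 * (n : ℚ) + 2)) *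
          (∑ i ∈ Finset.range (n + 1), cc i * cc (n - i) / (2 * i + 1)
            + ∑ i ∈ Finset.range (n + 1), cc i * cc (n - i) / (2 * (n - i : ℕ) + 1)) := by
    rw [← Finset.sum_add_distrib, Finset.mul_sum]
    apply Finset.sum_congr rfl
    intro i hi
    have hle : i ≤ n := by simpa [Finset.mem_range, Nat.lt_succ_iff] using hi
    have hcast : ((n : ℚ) - i) = ((n - i : ℕ) : ℚ) := by
      rw [Nat.cast_sub hle]
    simp only [cc]
    rw [hcast]
    exact pf n i (n - i) (by omega)
  have hrefl : ∑ i ∈ Finset.range (n + 1), cc i * cc (n - i) / (2 * (n - i : ℕ) + 1)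
      = ∑ i ∈ Finset.range (n + 1), cc i * cc (n - i) / (2 * i + 1) := by
    have h := Finset.sum_range_reflect (fun k => cc k * cc (n - k) / (2 * (k : ℚ) + 1)) (n + 1)
    simp only [Nat.add_sub_cancel] at h
    rw [← h]
    apply Finset.sum_congr rfl
    intro i hi
    have hle : i ≤ n := by simpa [Finset.mem_range, Nat.lt_succ_iff] using hi
    have h2 : n - (n - i) = i := by omega
    rw [h2, mul_comm (cc i)]
  rw [hsum, hrefl]
  have hk := key n
  have hne : (2 * (n : ℚ) + 2) ≠ 0 := by positivity
  have hcc : ((Nat.choose (2 * n) n : ℕ) : ℚ) = cc n := rfl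
  push_cast [hcc]
  have h16 : (16 : ℚ) ^ n = 2 ^ (4 * n) := by
    rw [pow_mul]; norm_num
  rw [← h16, ← hk]
  field_simp
  ring
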